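/- Let R be a commutative Noetherian ring and x_1, …, x_n a permutable regular sequence in R. Let I = (x_1, …, x_r) with r ≤ n, let f ∈ R, let 1 ≤ i ≤ n and k ≥ 1, and assume x_i·f ∈ I^k. Then: if x_i ∈ I then f ∈ I^{k-1}, and if x_i ∉ I then f ∈ I^k. -/

import Mathlib

/-- A list `xs = [x₁, …, xₙ]` of elements of a commutative ring `R` is a regular sequence if
each `xᵢ` is a nonzerodivisor modulo the ideal generated by its predecessors, and the ideal
`(x₁, …, xₙ)` is proper. -/
def IsRegularSeq {R : Type*} [CommRing R] (xs : List R) : Prop :=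
  (∀ (i : Fin xs.length) (f : R),
      xs.get i * f ∈ Ideal.span {a | a ∈ xs.take (i : ℕ)} →
        f ∈ Ideal.span {a | a ∈ xs.take (i : ℕ)}) ∧
    Ideal.span {a | a ∈ xs} ≠ ⊤

/-- A list of elements of a commutative ring is a permutable regular sequence if every
permutation of it is a regular sequence. -/
def IsPermutableRegularSeq {R : Type*} [CommRing R] (xs : List R) : Prop :=
  ∀ ys : List R, ys.Perm xs → IsRegularSeq ys

section ReesAux

variable {R : Type*} [CommRing R]

/-- span of the elements of a list -/
def spL (l : List R) : Ideal R := Ideal.span {a | a ∈ l}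

lemma spL_nil : spL ([] : List R) = ⊥ := by
  have : {a : R | a ∈ ([] : List R)} = ∅ := by ext a; simp
  simp [spL, this]

lemma spL_cons (z : R) (l : List R) : spL (z :: l) = Ideal.span {z} ⊔ spL l := by
  have : {a : R | a ∈ z :: l} = insert z {a : R | a ∈ l} := by ext a; simp
  rw [spL, this, Ideal.span_insert, spL]

lemma spL_append (l l' : List R) : spL (l ++ l') = spL l ⊔ spL l' := by
  have : {a : R | a ∈ l ++ l'} = {a : R | a ∈ l} ∪ {a : R | a ∈ l'} := by ext a; simp
  rw [spL, this, Ideal.span_union, spL, spL]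

lemma spL_perm {l l' : List R} (h : l.Perm l') : spL l = spL l' := by
  have : {a : R | a ∈ l} = {a : R | a ∈ l'} := by ext a; simp [h.mem_iff]
  rw [spL, this, spL]

lemma spL_singleton (z : R) : spL [z] = Ideal.span {z} := by
  rw [spL_cons, spL_nil, sup_bot_eq]

lemma spL_mono {l l' : List R} (h : ∀ a ∈ l, a ∈ l') : spL l ≤ spL l' :=
  Ideal.span_mono h

lemma idealPow_mono {I J : Ideal R} (h : I ≤ J) : ∀ k : ℕ, I ^ k ≤ J ^ k := by
  intro k
  induction k with
  | zero => simp
  | succ k ih => rw [pow_succ, pow_succ]; exact Ideal.mul_mono ih h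

/-- `(J ⊔ (z))^(k+1) ≤ J^(k+1) ⊔ (z) * (J ⊔ (z))^k`. -/
lemma pow_succ_le (J : Ideal R) (z : R) :
    ∀ k : ℕ, (J ⊔ Ideal.span {z}) ^ (k + 1) ≤
      J ^ (k + 1) ⊔ Ideal.span {z} * (J ⊔ Ideal.span {z}) ^ k := by
  intro k
  induction k with
  | zero => simp [Ideal.mul_top]
  | succ k ih =>
      calc (J ⊔ Ideal.span {z}) ^ (k + 2)
          = (J ⊔ Ideal.span {z}) ^ (k + 1) * (J ⊔ Ideal.span {z}) := by rw [pow_succ]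
        _ ≤ (J ^ (k + 1) ⊔ Ideal.span {z} * (J ⊔ Ideal.span {z}) ^ k) *
              (J ⊔ Ideal.span {z}) := Ideal.mul_mono_left ih
        _ ≤ J ^ (k + 2) ⊔ Ideal.span {z} * (J ⊔ Ideal.span {z}) ^ (k + 1) := by
            rw [Ideal.sup_mul, Ideal.mul_sup]
            refine sup_le (sup_le ?_ ?_) ?_
            · rw [← pow_succ]; exact le_sup_left
            · refine le_sup_of_le_right ?_
              rw [mul_comm (J ^ (k+1)) (Ideal.span {z})]
              exact Ideal.mul_mono_right (idealPow_mono le_sup_left (k+1))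
            · refine le_sup_of_le_right ?_
              rw [mul_assoc, ← pow_succ]

/-- The relative hypothesis: every permutation of `as` is a regular sequence modulo `N`,
and the ideal generated by `as` together with `N` is proper. -/
def Hyp (as : List R) (N : Ideal R) : Prop :=
  (∀ ys : List R, ys.Perm as → ∀ (i : Fin ys.length) (f : R),
      ys.get i * f ∈ spL (ys.take (i : ℕ)) ⊔ N → f ∈ spL (ys.take (i : ℕ)) ⊔ N) ∧
    spL as ⊔ N ≠ ⊤

lemma Hyp_perm {l l' : List R} (h : l.Perm l') {N : Ideal R} (hH : Hyp l N) : Hyp l' N := by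
  refine ⟨fun ys hys => hH.1 ys (hys.trans h.symm), ?_⟩
  rw [← spL_perm h]; exact hH.2

end ReesAux

theorem rees_main (n : ℕ) : ∀ {R : Type*} [CommRing R] (as : List R) (N : Ideal R),
    as.length = n → Hyp as N →
    ((∀ (h : as ≠ []) (k : ℕ) (f : R),
        as.getLast h * f ∈ spL as ^ (k + 1) ⊔ N → f ∈ spL as ^ k ⊔ N) ∧
      (∀ (k : ℕ) (y : R), (∀ g : R, y * g ∈ spL as ⊔ N → g ∈ spL as ⊔ N) →
        ∀ f : R, y * f ∈ spL as ^ k ⊔ N → f ∈ spL as ^ k ⊔ N)) := by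
  induction n with
  | zero =>
      intro R _ as N hlen hH
      have has : as = [] := List.length_eq_zero_iff.mp hlen
      subst has
      constructor
      · intro h; exact absurd rfl h
      · intro k y hy f hf
        match k with
        | 0 => simp
        | (k+1) =>
            have hb : spL ([] : List R) ^ (k+1) = ⊥ := by
              rw [spL_nil]; exact zero_pow (Nat.succ_ne_zero k)
            rw [hb] at hf ⊢
            have := hy f (by rw [spL_nil]; exact hf)
            rw [spL_nil] at this; exact this
  | succ n ih =>
      intro R _ as N hlen hH
      have hne : as ≠ [] := by intro h; rw [h] at hlen; simp at hlen
      have hdec : as.dropLast ++ [as.getLast hne] = as := List.dropLast_append_getLast hne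
      set bs := as.dropLast with hbs
      set z := as.getLast hne with hz
      have hlenbs : bs.length = n := by
        rw [hbs, List.length_dropLast, hlen]
        omega
      have hIJ : spL as = spL bs ⊔ Ideal.span {z} := by
        conv_lhs => rw [← hdec]
        rw [spL_append, spL_singleton]
      have hJI : spL bs ≤ spL as := by rw [hIJ]; exact le_sup_left
      have hZI : Ideal.span {z} ≤ spL as := by rw [hIJ]; exact le_sup_right
      have hzmem : z ∈ spL as := hZI (Ideal.mem_span_singleton_self z)
      -- `z` is regular modulo `(bs) ⊔ N`
      have hzreg : ∀ g : R, z * g ∈ spL bs ⊔ N → g ∈ spL bs ⊔ N := by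
        intro g hg
        have h1 : n < as.length := by omega
        have h2 : as.get ⟨n, h1⟩ = z := by
          rw [hz, List.getLast_eq_getElem, List.get_eq_getElem]
          congr 1
          simp [Fin.ext_iff, hlen]
        have h3 : as.take n = bs := by
          rw [hbs, List.dropLast_eq_take, hlen]
          congr 1
        have h4 := hH.1 as (List.Perm.refl as) ⟨n, h1⟩ g
        simp only [h2, h3] at h4
        exact h4 hg
      -- `Hyp bs N`
      have hHbsN : Hyp bs N := by
        constructor
        · intro ys hys i f hf
          have hp : (ys ++ [z]).Perm as := by
            rw [← hdec]; exact hys.append_right [z]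
          have hi : (i : ℕ) < (ys ++ [z]).length := by
            rw [List.length_append]; exact lt_of_lt_of_le i.isLt (by simp)
          have h5 := hH.1 (ys ++ [z]) hp ⟨i, hi⟩ f
          have hget : (ys ++ [z]).get ⟨(i : ℕ), hi⟩ = ys.get i := by
            simp [List.get_eq_getElem, List.getElem_append_left i.isLt]
          have htake : (ys ++ [z]).take (i : ℕ) = ys.take (i : ℕ) :=
            List.take_append_of_le_length (le_of_lt i.isLt)
          simp only [hget, htake] at h5
          exact h5 hf
        · intro htop
          apply hH.2
          rw [eq_top_iff, ← htop]
          exact sup_le_sup_right hJI N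
      -- `Hyp bs (span {z} ⊔ N)`
      have hHbsZN : Hyp bs (Ideal.span {z} ⊔ N) := by
        constructor
        · intro ys hys i f hf
          have hp : (z :: ys).Perm as := by
            rw [← hdec]
            exact (hys.cons z).trans (List.perm_append_comm (l₁ := [z]) (l₂ := bs))
          have hi : (i : ℕ) + 1 < (z :: ys).length := by
            simp only [List.length_cons]
            exact Nat.succ_lt_succ i.isLt
          have h5 := hH.1 (z :: ys) hp ⟨(i : ℕ) + 1, hi⟩ f
          have hget : (z :: ys).get ⟨(i : ℕ) + 1, hi⟩ = ys.get i := by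
            simp [List.get_eq_getElem]
          have htake : (z :: ys).take ((i : ℕ) + 1) = z :: ys.take (i : ℕ) := rfl
          have hsup : spL (z :: ys.take (i : ℕ)) ⊔ N =
              spL (ys.take (i : ℕ)) ⊔ (Ideal.span {z} ⊔ N) := by
            rw [spL_cons, sup_comm (Ideal.span {z}) (spL (ys.take (i : ℕ))), sup_assoc]
          simp only [hget, htake, hsup] at h5
          exact h5 hf
        · intro htop
          apply hH.2
          rw [← sup_assoc, ← hIJ] at htop
          exact htop
      obtain ⟨-, C1N⟩ := ih bs N hlenbs hHbsN
      obtain ⟨-, C1ZN⟩ := ih bs (Ideal.span {z} ⊔ N) hlenbs hHbsZN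
      -- the key step : `z * f ∈ I^(k+1) ⊔ N → f ∈ I^k ⊔ N`
      have key : ∀ (k : ℕ) (f : R), z * f ∈ spL as ^ (k + 1) ⊔ N → f ∈ spL as ^ k ⊔ N := by
        intro k f hf
        have h6 := pow_succ_le (spL bs) z k
        rw [← hIJ] at h6
        have h1 : z * f ∈ (spL bs ^ (k + 1) ⊔ Ideal.span {z} * spL as ^ k) ⊔ N :=
          sup_le_sup_right h6 N hf
        obtain ⟨p, hp, ν, hν, hpν⟩ := Submodule.mem_sup.mp h1
        obtain ⟨v, hv, w, hw, hvw⟩ := Submodule.mem_sup.mp hp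
        obtain ⟨u, hu, huw⟩ := Ideal.mem_span_singleton_mul.mp hw
        have h2 : z * (f - u) ∈ spL bs ^ (k + 1) ⊔ N := by
          have : z * (f - u) = v + ν := by
            linear_combination -hpν - hvw - huw
          rw [this]
          exact Submodule.add_mem _ (Submodule.mem_sup_left hv) (Submodule.mem_sup_right hν)
        have h3 := C1N (k + 1) z hzreg (f - u) h2
        have h4 : spL bs ^ (k + 1) ⊔ N ≤ spL as ^ k ⊔ N :=
          sup_le_sup_right ((idealPow_mono hJI (k + 1)).trans
            (Ideal.pow_le_pow_right (Nat.le_succ k))) N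
        have h5 : f = (f - u) + u := by ring
        rw [h5]
        exact Submodule.add_mem _ (h4 h3) (Submodule.mem_sup_left hu)
      -- statement C1 for `as`
      have C1 : ∀ (k : ℕ) (y : R), (∀ g : R, y * g ∈ spL as ⊔ N → g ∈ spL as ⊔ N) →
          ∀ f : R, y * f ∈ spL as ^ k ⊔ N → f ∈ spL as ^ k ⊔ N := by
        intro k
        induction k with
        | zero => intro y hy f hf; simp
        | succ k ihk =>
            intro y hy f hf
            have hy' : ∀ g : R, y * g ∈ spL bs ⊔ (Ideal.span {z} ⊔ N) →
                g ∈ spL bs ⊔ (Ideal.span {z} ⊔ N) := by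
              intro g hg
              rw [← sup_assoc, ← hIJ] at hg ⊢
              exact hy g hg
            have hf2 : y * f ∈ spL bs ^ (k + 1) ⊔ (Ideal.span {z} ⊔ N) := by
              have h6 := pow_succ_le (spL bs) z k
              rw [← hIJ] at h6
              have hle : spL as ^ (k + 1) ⊔ N ≤ spL bs ^ (k + 1) ⊔ (Ideal.span {z} ⊔ N) := by
                refine sup_le ?_ (le_sup_of_le_right le_sup_right)
                refine h6.trans (sup_le le_sup_left ?_)
                exact le_sup_of_le_right (le_sup_of_le_left Ideal.mul_le_left)
              exact hle hf
            have hf3 := C1ZN (k + 1) y hy' f hf2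
            obtain ⟨h₀, hh₀, q, hq, hfq⟩ := Submodule.mem_sup.mp hf3
            obtain ⟨w, hwZ, ν, hν, hq2⟩ := Submodule.mem_sup.mp hq
            obtain ⟨c, hc⟩ := Ideal.mem_span_singleton'.mp hwZ
            have h7 : z * (y * c) ∈ spL as ^ (k + 1) ⊔ N := by
              have hyh : y * h₀ ∈ spL as ^ (k + 1) ⊔ N :=
                Submodule.mem_sup_left (Ideal.mul_mem_left _ y (idealPow_mono hJI (k + 1) hh₀))
              have hyν : y * ν ∈ spL as ^ (k + 1) ⊔ N :=
                Submodule.mem_sup_right (Ideal.mul_mem_left _ y hν)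
              have heq : z * (y * c) = y * f - y * h₀ - y * ν := by
                linear_combination y * hc + y * hq2 + y * hfq
              rw [heq]
              exact Submodule.sub_mem _ (Submodule.sub_mem _ hf hyh) hyν
            have h8 := key k (y * c) h7
            have h9 := ihk y hy c h8
            obtain ⟨c₁, hc₁, ν₂, hν₂, hc3⟩ := Submodule.mem_sup.mp h9
            have h10 : w ∈ spL as ^ (k + 1) ⊔ N := by
              have heq : w = z * c₁ + z * ν₂ := by linear_combination -hc - z * hc3
              rw [heq]
              refine Submodule.add_mem _ (Submodule.mem_sup_left ?_)
                (Submodule.mem_sup_right (Ideal.mul_mem_left _ z hν₂))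
              rw [pow_succ']
              exact Ideal.mul_mem_mul hzmem hc₁
            have heqf : f = h₀ + w + ν := by rw [← hfq, ← hq2]; ring
            rw [heqf]
            exact Submodule.add_mem _ (Submodule.add_mem _
              (Submodule.mem_sup_left (idealPow_mono hJI (k + 1) hh₀)) h10)
              (Submodule.mem_sup_right hν)
      exact ⟨fun h k f hf => key k f hf, C1⟩

lemma rees_C2 {R : Type*} [CommRing R] (as : List R) (N : Ideal R) (hH : Hyp as N)
    (k : ℕ) (j : Fin as.length) (f : R)
    (hf : as.get j * f ∈ spL as ^ (k + 1) ⊔ N) : f ∈ spL as ^ k ⊔ N := by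
  classical
  have ha : as.get j ∈ as := List.get_mem as j
  have hperm : (as.erase (as.get j) ++ [as.get j]).Perm as :=
    List.perm_append_comm.trans (List.perm_cons_erase ha).symm
  have hHys : Hyp (as.erase (as.get j) ++ [as.get j]) N := Hyp_perm hperm.symm hH
  have hne : (as.erase (as.get j) ++ [as.get j]) ≠ [] := by simp
  have hlast : (as.erase (as.get j) ++ [as.get j]).getLast hne = as.get j :=
    List.getLast_concat
  have hsp : spL (as.erase (as.get j) ++ [as.get j]) = spL as := spL_perm hperm
  have h := (rees_main (as.erase (as.get j) ++ [as.get j]).length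
    (as.erase (as.get j) ++ [as.get j]) N rfl hHys).1 hne k f
  rw [hlast, hsp] at h
  exact h hf

/-- Let `R` be Noetherian, `x₁, …, xₙ` a permutable regular sequence,
`I = (x₁, …, x_r)` with `r ≤ n`, `f ∈ R`, `1 ≤ i ≤ n`, `k ≥ 1`, and `xᵢ * f ∈ I ^ k`.
Then `xᵢ ∈ I` implies `f ∈ I ^ (k - 1)`, and `xᵢ ∉ I` implies `f ∈ I ^ k`. -/
theorem rees_mul_mem_pow
    {R : Type*} [CommRing R] [IsNoetherianRing R] (xs : List R)
    (hperm : IsPermutableRegularSeq xs)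
    (r : ℕ) (hr : r ≤ xs.length)
    (I : Ideal R) (hI : I = Ideal.span {a | a ∈ xs.take r})
    (f : R) (i : Fin xs.length) (k : ℕ) (hk : 1 ≤ k)
    (hxf : xs.get i * f ∈ I ^ k) :
    (xs.get i ∈ I → f ∈ I ^ (k - 1)) ∧ (xs.get i ∉ I → f ∈ I ^ k) := by
  classical
  have hproper : Ideal.span {a : R | a ∈ xs} ≠ ⊤ := (hperm xs (List.Perm.refl xs)).2
  have hsub : spL (xs.take r) ≤ spL xs :=
    spL_mono fun a hamem => List.take_subset r xs hamem
  have hIs : I = spL (xs.take r) := hI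
  have hIproper : I ≠ ⊤ := by
    rw [hIs]
    intro h
    exact hproper (eq_top_iff.mpr (le_trans (le_of_eq h.symm) hsub))
  have hHyp : Hyp (xs.take r) (⊥ : Ideal R) := by
    constructor
    · intro ys hys i' f' hf'
      have hp : (ys ++ xs.drop r).Perm xs :=
        (hys.append_right _).trans (by rw [List.take_append_drop])
      have hi' : (i' : ℕ) < (ys ++ xs.drop r).length := by
        rw [List.length_append]; exact lt_of_lt_of_le i'.isLt (Nat.le_add_right _ _)
      have h5 := (hperm (ys ++ xs.drop r) hp).1 ⟨(i' : ℕ), hi'⟩ f'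
      have hget : (ys ++ xs.drop r).get ⟨(i' : ℕ), hi'⟩ = ys.get i' := by
        simp [List.get_eq_getElem, List.getElem_append_left i'.isLt]
      have htake : (ys ++ xs.drop r).take (i' : ℕ) = ys.take (i' : ℕ) :=
        List.take_append_of_le_length (le_of_lt i'.isLt)
      simp only [hget, htake] at h5
      rw [sup_bot_eq] at hf' ⊢
      exact h5 hf'
    · rw [sup_bot_eq]
      intro h
      exact hproper (eq_top_iff.mpr (le_trans (le_of_eq h.symm) hsub))
  by_cases hir : (i : ℕ) < r
  · -- `xs.get i` is among the generators of `I`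
    have hj : (i : ℕ) < (xs.take r).length := by
      rw [List.length_take]; exact lt_min hir i.isLt
    have hget : (xs.take r).get ⟨(i : ℕ), hj⟩ = xs.get i := by
      simp [List.get_eq_getElem]
    have hmem : xs.get i ∈ xs.take r := by
      rw [← hget]; exact List.get_mem _ _
    have hxiI : xs.get i ∈ I := by rw [hIs]; exact Ideal.subset_span hmem
    constructor
    · intro _
      have hside : (xs.take r).get ⟨(i : ℕ), hj⟩ * f ∈ spL (xs.take r) ^ (k - 1 + 1) ⊔ ⊥ := by
        rw [hget, sup_bot_eq]
        have hkk : k - 1 + 1 = k := Nat.succ_pred_eq_of_pos hk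
        rw [hkk, ← hIs]
        exact hxf
      have h := rees_C2 (xs.take r) ⊥ hHyp (k - 1) ⟨(i : ℕ), hj⟩ f hside
      rw [sup_bot_eq] at h
      rw [hIs]
      exact h
    · intro h; exact absurd hxiI h
  · -- `xs.get i` lies beyond the first `r` elements
    have hyd : xs.get i ∈ xs.drop r := by
      have h1 : (i : ℕ) - r < (xs.drop r).length := by
        rw [List.length_drop]; omega
      have h2 : (xs.drop r).get ⟨(i : ℕ) - r, h1⟩ = xs.get i := by
        simp only [List.get_eq_getElem, List.getElem_drop]
        congr 1
        omega
      rw [← h2]; exact List.get_mem _ _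
    have hp2 : (xs.take r ++ xs.get i :: (xs.drop r).erase (xs.get i)).Perm xs := by
      refine (List.Perm.append_left (xs.take r) (List.perm_cons_erase hyd).symm).trans ?_
      rw [List.take_append_drop]
    have hrlt : r < (xs.take r ++ xs.get i :: (xs.drop r).erase (xs.get i)).length := by
      rw [List.length_append, List.length_take]
      have : min r xs.length = r := min_eq_left hr
      rw [this, List.length_cons]
      omega
    have hltake : (xs.take r).length = r := by
      rw [List.length_take]; exact min_eq_left hr
    have hget2 : (xs.take r ++ xs.get i :: (xs.drop r).erase (xs.get i)).get ⟨r, hrlt⟩ =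
        xs.get i := by
      simp only [List.get_eq_getElem]
      rw [List.getElem_append_right (by rw [hltake])]
      simp [hltake]
    have htake2 : (xs.take r ++ xs.get i :: (xs.drop r).erase (xs.get i)).take r =
        xs.take r := List.take_left' hltake
    have hreg := (hperm _ hp2).1 ⟨r, hrlt⟩
    have hreg' : ∀ g : R, xs.get i * g ∈ spL (xs.take r) → g ∈ spL (xs.take r) := by
      intro g hg
      have h5 := hreg g
      simp only [hget2, htake2] at h5
      exact h5 hg
    have hnotin : xs.get i ∉ I := by
      intro hmem
      apply hIproper
      rw [Ideal.eq_top_iff_one, hIs]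
      exact hreg' 1 (by rw [mul_one, ← hIs]; exact hmem)
    refine ⟨fun h => absurd h hnotin, fun _ => ?_⟩
    have h := (rees_main (xs.take r).length (xs.take r) ⊥ rfl hHyp).2 k (xs.get i)
      (fun g hg => by rw [sup_bot_eq] at hg ⊢; exact hreg' g hg) f
      (by rw [sup_bot_eq, ← hIs]; exact hxf)
    rw [sup_bot_eq] at h
    rw [hIs]
    exact h
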